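/- Let a, h, μ, ψ be nonnegative reals with h > 0, μ > 0, K a positive integer, satisfying h²/(1 + a²h²)^K = μ − ψ and a²·ψ = 0. Then a² = ((h²)^{1/K}/h²) · max( μ^{-1/K} − (h²)^{-1/K}, 0 ). -/

import Mathlib

theorem waterfilling_scalar (a h μ ψ : ℝ) (K : ℕ)
    (ha : 0 ≤ a) (hh : 0 < h) (hμ : 0 < μ) (hψ : 0 ≤ ψ) (hK : 0 < K)
    (heq : h ^ 2 / (1 + a ^ 2 * h ^ 2) ^ K = μ - ψ)
    (hcs : a ^ 2 * ψ = 0) :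
    a ^ 2 = ((h ^ 2) ^ ((1 : ℝ) / K) / h ^ 2) *
      max (μ ^ (-(1 : ℝ) / K) - (h ^ 2) ^ (-(1 : ℝ) / K)) 0 := by
  have hh2 : (0:ℝ) < h ^ 2 := by positivity
  have hKR : (0:ℝ) < (K:ℝ) := by exact_mod_cast hK
  rcases mul_eq_zero.mp hcs with h0 | hψ0
  · -- a² = 0
    rw [h0]
    have hμh : h ^ 2 ≤ μ := by
      have : h ^ 2 / (1:ℝ) ^ K = μ - ψ := by rwa [h0, zero_mul, add_zero] at heq
      simp at this; linarith
    have hexp : -(1:ℝ)/K ≤ 0 := by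
      rw [neg_div]; exact neg_nonpos.mpr (by positivity)
    have : μ ^ (-(1:ℝ) / K) - (h ^ 2) ^ (-(1:ℝ) / K) ≤ 0 := by
      have := Real.rpow_le_rpow_of_nonpos hh2 hμh hexp
      linarith
    rw [max_eq_right this, mul_zero]
  · -- ψ = 0
    subst hψ0
    set t : ℝ := 1 + a ^ 2 * h ^ 2 with ht
    have ht1 : (1:ℝ) ≤ t := by nlinarith
    have ht0 : (0:ℝ) < t := by linarith
    have htK : t ^ K = h ^ 2 / μ := by
      rw [sub_zero] at heq
      field_simp at heq ⊢
      nlinarith [pow_pos ht0 K]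
    have hμh : μ ≤ h ^ 2 := by
      have h1 : (1:ℝ) ≤ t ^ K := one_le_pow₀ ht1
      rw [htK, le_div_iff₀ hμ] at h1
      linarith
    have htr : t = (h ^ 2 / μ) ^ ((1:ℝ) / K) := by
      rw [← htK, ← Real.rpow_natCast t K, ← Real.rpow_mul ht0.le]
      rw [mul_one_div, div_self (ne_of_gt hKR), Real.rpow_one]
    have hmax : max (μ ^ (-(1:ℝ) / K) - (h ^ 2) ^ (-(1:ℝ) / K)) 0
        = μ ^ (-(1:ℝ) / K) - (h ^ 2) ^ (-(1:ℝ) / K) := by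
      apply max_eq_left
      have hexp : -(1:ℝ)/K ≤ 0 := by
        rw [neg_div]; exact neg_nonpos.mpr (by positivity)
      have := Real.rpow_le_rpow_of_nonpos hμ hμh hexp
      linarith
    rw [hmax]
    have hdiv : (h ^ 2 / μ) ^ ((1:ℝ) / K)
        = (h ^ 2) ^ ((1:ℝ) / K) * μ ^ (-(1:ℝ) / K) := by
      rw [Real.div_rpow hh2.le hμ.le, neg_div, Real.rpow_neg hμ.le, div_eq_mul_inv]
    have hinv : (h ^ 2) ^ ((1:ℝ) / K) * (h ^ 2) ^ (-(1:ℝ) / K) = 1 := by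
      have he : (1:ℝ)/K + -(1:ℝ)/K = 0 := by ring
      rw [← Real.rpow_add hh2, he, Real.rpow_zero]
    have hA : a ^ 2 * h ^ 2 = t - 1 := by rw [ht]; ring
    have key : a ^ 2 * h ^ 2 =
        (h ^ 2) ^ ((1:ℝ) / K) * (μ ^ (-(1:ℝ) / K) - (h ^ 2) ^ (-(1:ℝ) / K)) := by
      rw [hA, htr, hdiv, mul_sub, hinv]
    field_simp
    rw [neg_div] at key
    linarith [key]
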